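/- With T = ⌈log²S⌉, the variance of the estimator B̂ = S(T-1)/(L-1) satisfies Var[B̂] = O(B²/log²S) as S → ∞, uniformly over B with T ≤ B ≤ S. -/

import Mathlib

open Finset

/-- The probability mass function of the negative hypergeometric distribution
`NHG(S, G, T)`. -/
noncomputable def nhgWeight (S G T g : ℕ) : ℝ :=
  (Nat.choose (g + T - 1) g * Nat.choose (S - T - g) (G - g) : ℝ) / (Nat.choose S G : ℝ)

/-- The choice `T = ⌈log² S⌉` used by the algorithm. -/
noncomputable def Tof (S : ℕ) : ℕ := ⌈(Real.log S) ^ 2⌉₊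

/-- The variance of the estimator `B̂ = S(T-1)/(L-1)`, where `L = Y + T` with
`Y ~ NHG(S, S - B, T)` and `T = ⌈log² S⌉`. -/
noncomputable def varBhat (S B : ℕ) : ℝ :=
  (∑ g ∈ Finset.range (S - B + 1),
      ((S : ℝ) * ((Tof S : ℝ) - 1) / ((g : ℝ) + (Tof S : ℝ) - 1)) ^ 2
        * nhgWeight S (S - B) (Tof S) g)
  - (∑ g ∈ Finset.range (S - B + 1),
      ((S : ℝ) * ((Tof S : ℝ) - 1) / ((g : ℝ) + (Tof S : ℝ) - 1))
        * nhgWeight S (S - B) (Tof S) g) ^ 2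

set_option maxHeartbeats 1000000


/-- `(m+1) * C(m,g) = (m+1-g) * C(m+1,g)` -/
lemma step_lemma (m g : ℕ) : (m + 1) * Nat.choose m g = (m + 1 - g) * Nat.choose (m + 1) g := by
  rcases le_or_gt g m with h | h
  · rw [Nat.add_one_mul_choose_eq, Nat.choose_succ_right_eq, Nat.mul_comm]
  · rcases eq_or_lt_of_le (Nat.succ_le_of_lt h) with h' | h'
    · rw [Nat.choose_eq_zero_of_lt h, ← h', Nat.sub_self, Nat.mul_zero, Nat.zero_mul]
    · rw [Nat.choose_eq_zero_of_lt h, Nat.choose_eq_zero_of_lt h', Nat.mul_zero, Nat.mul_zero]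

lemma hockey (a : ℕ) : ∀ m, ∑ g ∈ range (m + 1), Nat.choose (g + a) g = Nat.choose (m + a + 1) m := by
  intro m
  induction m with
  | zero => simp
  | succ m ih =>
    rw [Finset.sum_range_succ, ih]
    have e : m + 1 + a = m + a + 1 := by omega
    rw [e, Nat.choose_succ_succ (m + a + 1) m]

lemma keyA (a : ℕ) : ∀ n, ∀ b, ∑ p ∈ Finset.HasAntidiagonal.antidiagonal n,
    Nat.choose (p.1 + a) p.1 * Nat.choose (p.2 + b) p.2 = Nat.choose (n + a + b + 1) n := by
  intro n
  induction n with
  | zero => simp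
  | succ n ih =>
    intro b
    induction b with
    | zero =>
      have h1 : ∀ p ∈ Finset.HasAntidiagonal.antidiagonal (n + 1),
          Nat.choose (p.1 + a) p.1 * Nat.choose (p.2 + 0) p.2 = Nat.choose (p.1 + a) p.1 := by
        intro p _; rw [Nat.add_zero, Nat.choose_self, Nat.mul_one]
      rw [Finset.sum_congr rfl h1,
        Finset.Nat.sum_antidiagonal_eq_sum_range_succ (fun i j => Nat.choose (i + a) i),
        hockey a (n + 1)]
    | succ b ihb =>
      rw [Finset.Nat.sum_antidiagonal_succ'
        (f := fun p => Nat.choose (p.1 + a) p.1 * Nat.choose (p.2 + (b + 1)) p.2)]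
      have h2 : ∀ p ∈ Finset.HasAntidiagonal.antidiagonal n,
          Nat.choose (p.1 + a) p.1 * Nat.choose (p.2 + 1 + (b + 1)) (p.2 + 1)
          = Nat.choose (p.1 + a) p.1 * Nat.choose (p.2 + (b + 1)) p.2
            + Nat.choose (p.1 + a) p.1 * Nat.choose (p.2 + 1 + b) (p.2 + 1) := by
        intro p _
        have e1 : p.2 + 1 + (b + 1) = (p.2 + b + 1) + 1 := by omega
        have e2 : p.2 + (b + 1) = p.2 + b + 1 := by omega
        have e3 : p.2 + 1 + b = p.2 + b + 1 := by omega
        rw [e1, Nat.choose_succ_succ (p.2 + b + 1) p.2, Nat.mul_add, e2, e3]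
      rw [Finset.sum_congr rfl h2, Finset.sum_add_distrib, ih (b + 1)]
      have h4 : ∑ p ∈ Finset.HasAntidiagonal.antidiagonal n,
            Nat.choose (p.1 + a) p.1 * Nat.choose (p.2 + 1 + b) (p.2 + 1)
          = Nat.choose (n + 1 + a + b + 1) (n + 1) - Nat.choose (n + 1 + a) (n + 1) := by
        have := Finset.Nat.sum_antidiagonal_succ'
          (f := fun p : ℕ × ℕ => Nat.choose (p.1 + a) p.1 * Nat.choose (p.2 + b) p.2) (n := n)
        rw [ihb] at this
        simp only [Nat.choose_zero_right] at this ⊢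
        omega
      rw [h4]
      have hle : Nat.choose (n + 1 + a) (n + 1) ≤ Nat.choose (n + 1 + a + b + 1) (n + 1) :=
        Nat.choose_le_choose _ (by omega)
      have hp : Nat.choose (n + 1 + a + (b + 1) + 1) (n + 1)
          = Nat.choose (n + a + (b + 1) + 1) n + Nat.choose (n + a + (b+1) + 1) (n + 1) := by
        have e : n + 1 + a + (b + 1) + 1 = (n + a + (b + 1) + 1) + 1 := by omega
        rw [e, Nat.choose_succ_succ]
      have e5 : n + 1 + a + b + 1 = n + a + (b + 1) + 1 := by omega
      rw [e5] at hle ⊢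
      rw [hp]
      simp only [Nat.choose_zero_right, Nat.mul_one]
      omega

lemma key (a : ℕ) (n b : ℕ) : ∑ g ∈ range (n + 1),
    Nat.choose (g + a) g * Nat.choose ((n - g) + b) (n - g) = Nat.choose (n + a + b + 1) n := by
  rw [← Finset.Nat.sum_antidiagonal_eq_sum_range_succ
    (fun i j => Nat.choose (i + a) i * Nat.choose (j + b) j), keyA a n b]
lemma momentOne (a c G : ℕ) :
    ∑ g ∈ range (G + 1), (((a:ℝ) + 2) / ((g:ℝ) + (a:ℝ) + 2))
        * ((Nat.choose (g + a + 2) g : ℝ) * (Nat.choose ((G - g) + c) (G - g) : ℝ))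
      = (Nat.choose (G + a + c + 2) G : ℝ) := by
  have h : ∀ g ∈ range (G + 1), (((a:ℝ) + 2) / ((g:ℝ) + (a:ℝ) + 2))
        * ((Nat.choose (g + a + 2) g : ℝ) * (Nat.choose ((G - g) + c) (G - g) : ℝ))
      = (Nat.choose (g + a + 1) g : ℝ) * (Nat.choose ((G - g) + c) (G - g) : ℝ) := by
    intro g _
    have hx : ((g:ℝ) + (a:ℝ) + 2) ≠ 0 := by positivity
    have hs := step_lemma (g + a + 1) g
    have e2 : g + a + 1 + 1 - g = a + 2 := by omega
    have e1 : g + a + 1 + 1 = g + a + 2 := by omega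
    rw [e2, e1] at hs
    have hsR : ((g:ℝ) + (a:ℝ) + 2) * (Nat.choose (g + a + 1) g : ℝ)
        = ((a:ℝ) + 2) * (Nat.choose (g + a + 2) g : ℝ) := by exact_mod_cast hs
    rw [div_mul_eq_mul_div, div_eq_iff hx]
    linear_combination (-(Nat.choose ((G - g) + c) (G - g) : ℝ)) * hsR
  rw [Finset.sum_congr rfl h]
  have hk := key (a + 1) G c
  simp only [← Nat.add_assoc] at hk
  have e : G + a + 1 + c + 1 = G + a + c + 2 := by omega
  rw [e] at hk
  exact_mod_cast hk

lemma momentTwo (a c G : ℕ) :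
    ∑ g ∈ range (G + 1),
        ((((a:ℝ) + 2) * ((a:ℝ) + 1)) / (((g:ℝ) + (a:ℝ) + 2) * ((g:ℝ) + (a:ℝ) + 1)))
          * ((Nat.choose (g + a + 2) g : ℝ) * (Nat.choose ((G - g) + c) (G - g) : ℝ))
      = (Nat.choose (G + a + c + 1) G : ℝ) := by
  have h : ∀ g ∈ range (G + 1),
      ((((a:ℝ) + 2) * ((a:ℝ) + 1)) / (((g:ℝ) + (a:ℝ) + 2) * ((g:ℝ) + (a:ℝ) + 1)))
          * ((Nat.choose (g + a + 2) g : ℝ) * (Nat.choose ((G - g) + c) (G - g) : ℝ))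
      = (Nat.choose (g + a) g : ℝ) * (Nat.choose ((G - g) + c) (G - g) : ℝ) := by
    intro g _
    have hx : (((g:ℝ) + (a:ℝ) + 2) * ((g:ℝ) + (a:ℝ) + 1)) ≠ 0 := by positivity
    have hs1 := step_lemma (g + a + 1) g
    have e2 : g + a + 1 + 1 - g = a + 2 := by omega
    have e1 : g + a + 1 + 1 = g + a + 2 := by omega
    rw [e2, e1] at hs1
    have hs2 := step_lemma (g + a) g
    have e4 : g + a + 1 - g = a + 1 := by omega
    rw [e4] at hs2
    have hs1R : ((g:ℝ) + (a:ℝ) + 2) * (Nat.choose (g + a + 1) g : ℝ)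
        = ((a:ℝ) + 2) * (Nat.choose (g + a + 2) g : ℝ) := by exact_mod_cast hs1
    have hs2R : ((g:ℝ) + (a:ℝ) + 1) * (Nat.choose (g + a) g : ℝ)
        = ((a:ℝ) + 1) * (Nat.choose (g + a + 1) g : ℝ) := by exact_mod_cast hs2
    have hcomb : (((g:ℝ) + (a:ℝ) + 2) * ((g:ℝ) + (a:ℝ) + 1)) * (Nat.choose (g + a) g : ℝ)
        = (((a:ℝ) + 2) * ((a:ℝ) + 1)) * (Nat.choose (g + a + 2) g : ℝ) := by
      have h5 : ((g:ℝ) + (a:ℝ) + 2) * (((g:ℝ) + (a:ℝ) + 1) * (Nat.choose (g + a) g : ℝ))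
          = ((g:ℝ) + (a:ℝ) + 2) * (((a:ℝ) + 1) * (Nat.choose (g + a + 1) g : ℝ)) := by
        rw [hs2R]
      linear_combination h5 + ((a:ℝ) + 1) * hs1R
    rw [div_mul_eq_mul_div, div_eq_iff hx]
    linear_combination (-(Nat.choose ((G - g) + c) (G - g) : ℝ)) * hcomb
  rw [Finset.sum_congr rfl h]
  have hk := key a G c
  exact_mod_cast hk

lemma perterm (Sr A2 A1 x y P CSr : ℝ) (hA1 : 0 < A1) (hx : 0 < x) (hy : 0 < y)
    (hyx : y ≤ x) (hP : 0 ≤ P) (hCS : 0 < CSr) (hS : 0 ≤ Sr) (hA2 : 0 ≤ A2) :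
    (Sr * A2 / x) ^ 2 * (P / CSr) ≤ (Sr^2 * A2 / (A1 * CSr)) * ((A2 * A1) / (x * y) * P) := by
  have e1 : (Sr * A2 / x)^2 * (P/CSr) = (Sr^2 * A2^2 * P) / (CSr * (x*x)) := by
    field_simp
  have e2 : (Sr^2 * A2 / (A1 * CSr)) * ((A2 * A1)/(x*y) * P)
      = (Sr^2 * A2^2 * P) / (CSr * (x*y)) := by
    field_simp
  rw [e1, e2]
  rw [div_le_div_iff₀ (by positivity) (by positivity)]
  have hN : (0:ℝ) ≤ Sr^2 * A2^2 * P * CSr * x := by positivity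
  nlinarith [mul_le_mul_of_nonneg_left hyx hN]

/-- **Asymptotic variance bound.** With `T = ⌈log² S⌉`, the variance of the
estimator `B̂ = S(T-1)/(L-1)` satisfies `Var[B̂] = O(B²/log² S)` as `S → ∞`,
uniformly over `B` with `T ≤ B ≤ S`. -/
theorem varBhat_asymptotic_bound :
    ∃ C : ℝ, 0 < C ∧ ∃ S₀ : ℕ, ∀ S : ℕ, S₀ ≤ S → ∀ B : ℕ,
      Tof S ≤ B → B ≤ S →
      varBhat S B ≤ C * (B : ℝ) ^ 2 / (Real.log S) ^ 2 := by
  refine ⟨6, by norm_num, 1000, ?_⟩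
  intro S hS B hTB hBS
  have hS0 : 0 < S := by omega
  have hSR : (1000:ℝ) ≤ (S:ℝ) := by exact_mod_cast hS
  have hSR0 : (0:ℝ) < (S:ℝ) := by linarith
  have hexp : Real.exp 2 ≤ (S:ℝ) := by
    have h1 : Real.exp 1 < 2.7182818286 := Real.exp_one_lt_d9
    have h2 : Real.exp 2 = Real.exp 1 * Real.exp 1 := by
      rw [← Real.exp_add]; norm_num
    nlinarith [Real.exp_pos 1]
  have hlog : (2:ℝ) ≤ Real.log S := by
    rw [show (2:ℝ) = Real.log (Real.exp 2) from (Real.log_exp 2).symm]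
    exact Real.log_le_log (Real.exp_pos 2) hexp
  have hl4 : (4:ℝ) ≤ (Real.log S)^2 := by nlinarith
  have hl0 : (0:ℝ) < (Real.log S)^2 := by nlinarith
  have hT4 : 4 ≤ Tof S := by
    have h := Nat.lt_ceil.mpr (show ((3:ℕ):ℝ) < (Real.log S)^2 by push_cast; linarith)
    simp only [Tof]
    omega
  have hTlow : (Real.log S)^2 ≤ (Tof S : ℝ) := Nat.le_ceil _
  -- log² S ≤ S - 2
  have hlS : (Real.log S)^2 ≤ (S:ℝ) - 2 := by
    have hrp : (0:ℝ) < (S:ℝ) ^ ((4:ℝ)⁻¹) := Real.rpow_pos_of_pos hSR0 _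
    have hlr : Real.log ((S:ℝ) ^ ((4:ℝ)⁻¹)) = (4:ℝ)⁻¹ * Real.log S :=
      Real.log_rpow hSR0 _
    have hle : Real.log ((S:ℝ) ^ ((4:ℝ)⁻¹)) ≤ (S:ℝ) ^ ((4:ℝ)⁻¹) := by
      have := Real.log_le_sub_one_of_pos hrp
      linarith
    have h4 : Real.log S ≤ 4 * (S:ℝ) ^ ((4:ℝ)⁻¹) := by
      rw [hlr] at hle; linarith
    have hsq : ((S:ℝ) ^ ((4:ℝ)⁻¹))^2 = (S:ℝ) ^ ((2:ℝ)⁻¹) := by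
      rw [← Real.rpow_natCast ((S:ℝ) ^ ((4:ℝ)⁻¹)) 2, ← Real.rpow_mul hSR0.le]
      norm_num
    have hsqrt : (S:ℝ) ^ ((2:ℝ)⁻¹) = Real.sqrt S := by
      rw [Real.sqrt_eq_rpow]; norm_num
    have h16 : (Real.log S)^2 ≤ 16 * Real.sqrt S := by
      have hnn : (0:ℝ) ≤ Real.log S := by linarith
      have := mul_self_le_mul_self hnn h4
      rw [show (4 * (S:ℝ) ^ ((4:ℝ)⁻¹)) * (4 * (S:ℝ) ^ ((4:ℝ)⁻¹))
            = 16 * ((S:ℝ) ^ ((4:ℝ)⁻¹))^2 by ring, hsq, hsqrt] at this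
      nlinarith
    have h31 : (31:ℝ) ≤ Real.sqrt S := by
      have : ((31:ℝ))^2 ≤ (S:ℝ) := by nlinarith
      nlinarith [Real.sq_sqrt hSR0.le, Real.sqrt_nonneg (S:ℝ),
        Real.sqrt_le_sqrt (show ((31:ℝ))^2 ≤ (S:ℝ) from this),
        Real.sqrt_sq (show (0:ℝ) ≤ 31 by norm_num)]
    have hss : Real.sqrt S * Real.sqrt S = (S:ℝ) := Real.mul_self_sqrt hSR0.le
    nlinarith [Real.sqrt_nonneg (S:ℝ)]
  have hTS : Tof S + 2 ≤ S := by
    have hc1 : (Tof S : ℝ) < (Real.log S)^2 + 1 := Nat.ceil_lt_add_one (by positivity)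
    have h2 : ((Tof S + 1 : ℕ):ℝ) < (S:ℝ) := by push_cast; linarith
    have := Nat.cast_lt.mp h2
    omega
  obtain ⟨a, ha⟩ : ∃ a, Tof S = a + 3 := ⟨Tof S - 3, by omega⟩
  have ha1 : 1 ≤ a := by omega
  obtain ⟨c, hc⟩ : ∃ c, B = a + 3 + c := ⟨B - (a + 3), by omega⟩
  obtain ⟨G, hGdef⟩ : ∃ G, S = G + (a + 3) + c := ⟨S - B, by omega⟩
  have hSB : S - B = G := by omega
  have hCSpos : (0:ℝ) < (Nat.choose S G : ℝ) := by
    exact_mod_cast Nat.choose_pos (show G ≤ S by omega)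
  have hCSne : (Nat.choose S G : ℝ) ≠ 0 := ne_of_gt hCSpos
  -- rewrite the weight
  have hw : ∀ g ∈ range (G + 1), nhgWeight S G (a + 3) g
      = ((Nat.choose (g + a + 2) g : ℝ) * (Nat.choose ((G - g) + c) (G - g) : ℝ))
          / (Nat.choose S G : ℝ) := by
    intro g hg
    have hgG : g ≤ G := by
      have := Finset.mem_range.mp hg; omega
    have e1 : g + (a + 3) - 1 = g + a + 2 := by omega
    have e2 : S - (a + 3) - g = (G - g) + c := by omega
    simp only [nhgWeight, e1, e2]
  -- first moment
  have hsum2 : ∑ g ∈ Finset.range (G + 1),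
      ((S : ℝ) * ((Tof S : ℝ) - 1) / ((g : ℝ) + (Tof S : ℝ) - 1))
        * nhgWeight S G (Tof S) g = (B:ℝ) := by
    rw [ha]
    have hterm : ∀ g ∈ range (G + 1),
        ((S : ℝ) * (((a + 3 : ℕ) : ℝ) - 1) / ((g : ℝ) + ((a + 3 : ℕ) : ℝ) - 1))
          * nhgWeight S G (a + 3) g
        = ((S:ℝ) / (Nat.choose S G : ℝ)) * ((((a:ℝ) + 2) / ((g:ℝ) + (a:ℝ) + 2))
            * ((Nat.choose (g + a + 2) g : ℝ) * (Nat.choose ((G - g) + c) (G - g) : ℝ))) := by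
      intro g hg
      rw [hw g hg]
      push_cast
      ring
    rw [Finset.sum_congr rfl hterm, ← Finset.mul_sum, momentOne a c G]
    have hnat : S * Nat.choose (G + a + c + 2) G = B * Nat.choose S G := by
      have h := step_lemma (G + a + c + 2) G
      have e2 : G + a + c + 2 + 1 - G = B := by omega
      have e1 : G + a + c + 2 + 1 = S := by omega
      rw [e2, e1] at h
      exact h
    have hR : (S:ℝ) * (Nat.choose (G + a + c + 2) G : ℝ)
        = (B:ℝ) * (Nat.choose S G : ℝ) := by exact_mod_cast hnat
    field_simp
    linear_combination hR
  -- second moment bound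
  have hsum1 : ∑ g ∈ Finset.range (G + 1),
      ((S : ℝ) * ((Tof S : ℝ) - 1) / ((g : ℝ) + (Tof S : ℝ) - 1)) ^ 2
        * nhgWeight S G (Tof S) g
      ≤ (S:ℝ) * ((a:ℝ) + 2) * (B:ℝ) * ((B:ℝ) - 1) / (((a:ℝ) + 1) * ((S:ℝ) - 1)) := by
    rw [ha]
    have hterm : ∀ g ∈ range (G + 1),
        ((S : ℝ) * (((a + 3 : ℕ) : ℝ) - 1) / ((g : ℝ) + ((a + 3 : ℕ) : ℝ) - 1)) ^ 2
          * nhgWeight S G (a + 3) g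
        ≤ ((S:ℝ)^2 * ((a:ℝ) + 2) / (((a:ℝ) + 1) * (Nat.choose S G : ℝ)))
            * (((((a:ℝ) + 2) * ((a:ℝ) + 1)) / (((g:ℝ) + (a:ℝ) + 2) * ((g:ℝ) + (a:ℝ) + 1)))
              * ((Nat.choose (g + a + 2) g : ℝ) * (Nat.choose ((G - g) + c) (G - g) : ℝ))) := by
      intro g hg
      rw [hw g hg]
      have hx : (0:ℝ) < (g:ℝ) + (a:ℝ) + 2 := by positivity
      have hy : (0:ℝ) < (g:ℝ) + (a:ℝ) + 1 := by positivity
      have hP : (0:ℝ) ≤ (Nat.choose (g + a + 2) g : ℝ) * (Nat.choose ((G - g) + c) (G - g) : ℝ) := by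
        positivity
      refine le_trans (le_of_eq ?_) (le_trans (perterm (S:ℝ) ((a:ℝ) + 2) ((a:ℝ) + 1)
        ((g:ℝ) + (a:ℝ) + 2) ((g:ℝ) + (a:ℝ) + 1)
        ((Nat.choose (g + a + 2) g : ℝ) * (Nat.choose ((G - g) + c) (G - g) : ℝ))
        ((Nat.choose S G : ℝ)) (by positivity) hx hy (by linarith) hP hCSpos
        (by positivity) (by positivity)) (le_of_eq ?_))
      · push_cast
        ring
      · ring
    have hstep := Finset.sum_le_sum hterm
    have heq2 : ∑ g ∈ range (G + 1),
        ((S:ℝ)^2 * ((a:ℝ) + 2) / (((a:ℝ) + 1) * (Nat.choose S G : ℝ)))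
            * (((((a:ℝ) + 2) * ((a:ℝ) + 1)) / (((g:ℝ) + (a:ℝ) + 2) * ((g:ℝ) + (a:ℝ) + 1)))
              * ((Nat.choose (g + a + 2) g : ℝ) * (Nat.choose ((G - g) + c) (G - g) : ℝ)))
        = ((S:ℝ)^2 * ((a:ℝ) + 2) / (((a:ℝ) + 1) * (Nat.choose S G : ℝ)))
            * (Nat.choose (G + a + c + 1) G : ℝ) := by
      rw [← Finset.mul_sum, momentTwo a c G]
    have hnat2 : ((G + a + c + 3) * (G + a + c + 2)) * Nat.choose (G + a + c + 1) G
        = ((a + c + 3) * (a + c + 2)) * Nat.choose (G + a + c + 3) G := by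
      have h1 := step_lemma (G + a + c + 1) G
      have e2 : G + a + c + 1 + 1 - G = a + c + 2 := by omega
      have e1 : G + a + c + 1 + 1 = G + a + c + 2 := by omega
      rw [e2, e1] at h1
      have h2 := step_lemma (G + a + c + 2) G
      have e4 : G + a + c + 2 + 1 - G = a + c + 3 := by omega
      have e3 : G + a + c + 2 + 1 = G + a + c + 3 := by omega
      rw [e4, e3] at h2
      calc ((G + a + c + 3) * (G + a + c + 2)) * Nat.choose (G + a + c + 1) G
          = (G + a + c + 3) * ((G + a + c + 2) * Nat.choose (G + a + c + 1) G) := by ring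
        _ = (G + a + c + 3) * ((a + c + 2) * Nat.choose (G + a + c + 2) G) := by rw [h1]
        _ = (a + c + 2) * ((G + a + c + 3) * Nat.choose (G + a + c + 2) G) := by ring
        _ = (a + c + 2) * ((a + c + 3) * Nat.choose (G + a + c + 3) G) := by rw [h2]
        _ = ((a + c + 3) * (a + c + 2)) * Nat.choose (G + a + c + 3) G := by ring
    have hnat2R : (((S:ℝ)) * ((S:ℝ) - 1)) * (Nat.choose (G + a + c + 1) G : ℝ)
        = ((B:ℝ) * ((B:ℝ) - 1)) * (Nat.choose S G : ℝ) := by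
      have hSe : S = G + a + c + 3 := by omega
      have hBr : (B:ℝ) = (a:ℝ) + (c:ℝ) + 3 := by
        rw [hc]; push_cast; ring
      have hSr : (S:ℝ) = (G:ℝ) + (a:ℝ) + (c:ℝ) + 3 := by
        rw [hSe]; push_cast; ring
      have hcast : (((G:ℝ) + (a:ℝ) + (c:ℝ) + 3) * ((G:ℝ) + (a:ℝ) + (c:ℝ) + 2))
            * (Nat.choose (G + a + c + 1) G : ℝ)
          = (((a:ℝ) + (c:ℝ) + 3) * ((a:ℝ) + (c:ℝ) + 2)) * (Nat.choose (G + a + c + 3) G : ℝ) := by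
        exact_mod_cast hnat2
      rw [hBr, hSr, show Nat.choose S G = Nat.choose (G + a + c + 3) G from by rw [hSe]]
      linear_combination hcast
    have hfin : ((S:ℝ)^2 * ((a:ℝ) + 2) / (((a:ℝ) + 1) * (Nat.choose S G : ℝ)))
            * (Nat.choose (G + a + c + 1) G : ℝ)
        = (S:ℝ) * ((a:ℝ) + 2) * (B:ℝ) * ((B:ℝ) - 1) / (((a:ℝ) + 1) * ((S:ℝ) - 1)) := by
      have hS1 : ((S:ℝ) - 1) ≠ 0 := by linarith
      have hA1 : ((a:ℝ) + 1) ≠ 0 := by positivity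
      rw [div_mul_eq_mul_div, div_eq_div_iff (mul_ne_zero hA1 hCSne) (mul_ne_zero hA1 hS1)]
      linear_combination ((a:ℝ) + 1) * ((a:ℝ) + 2) * (S:ℝ) * hnat2R
    calc ∑ g ∈ Finset.range (G + 1),
        ((S : ℝ) * (((a + 3:ℕ) : ℝ) - 1) / ((g : ℝ) + ((a + 3:ℕ) : ℝ) - 1)) ^ 2
          * nhgWeight S G (a + 3) g ≤ _ := hstep
      _ = _ := heq2
      _ = _ := hfin
  -- assemble
  have hvb : varBhat S B
      = (∑ g ∈ Finset.range (G + 1),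
          ((S : ℝ) * ((Tof S : ℝ) - 1) / ((g : ℝ) + (Tof S : ℝ) - 1)) ^ 2
            * nhgWeight S G (Tof S) g)
        - (∑ g ∈ Finset.range (G + 1),
          ((S : ℝ) * ((Tof S : ℝ) - 1) / ((g : ℝ) + (Tof S : ℝ) - 1))
            * nhgWeight S G (Tof S) g) ^ 2 := by
    rw [varBhat, hSB]
  rw [hvb, hsum2]
  have hmain : (S:ℝ) * ((a:ℝ) + 2) * (B:ℝ) * ((B:ℝ) - 1) / (((a:ℝ) + 1) * ((S:ℝ) - 1))
      - (B:ℝ)^2 ≤ 6 * (B:ℝ)^2 / (Real.log S)^2 := by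
    have hden : (0:ℝ) < ((a:ℝ) + 1) * ((S:ℝ) - 1) := by
      apply mul_pos
      · positivity
      · linarith
    have hll : (Real.log S)^2 ≤ (a:ℝ) + 3 := by
      rw [ha] at hTlow; push_cast at hTlow; linarith
    have hb4 : (4:ℝ) ≤ (B:ℝ) := by
      have : 4 ≤ B := by omega
      exact_mod_cast this
    have hbR : (B:ℝ) ≤ (S:ℝ) := by exact_mod_cast hBS
    have haR : (a:ℝ) + 5 ≤ (S:ℝ) := by
      have : a + 5 ≤ S := by omega
      exact_mod_cast this
    have ha1R : (1:ℝ) ≤ (a:ℝ) := by exact_mod_cast ha1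
    have hEq : (S:ℝ) * ((a:ℝ) + 2) * (B:ℝ) * ((B:ℝ) - 1) / (((a:ℝ) + 1) * ((S:ℝ) - 1))
        - (B:ℝ)^2
        = ((S:ℝ) * ((a:ℝ) + 2) * (B:ℝ) * ((B:ℝ) - 1)
            - (B:ℝ)^2 * (((a:ℝ) + 1) * ((S:ℝ) - 1))) / (((a:ℝ) + 1) * ((S:ℝ) - 1)) := by
      rw [sub_div, mul_div_cancel_right₀ _ hden.ne']
    rw [hEq, div_le_div_iff₀ hden hl0]
    rcases le_or_gt ((S:ℝ) * ((a:ℝ) + 2) * (B:ℝ) * ((B:ℝ) - 1)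
        - (B:ℝ)^2 * (((a:ℝ) + 1) * ((S:ℝ) - 1))) 0 with hN | hN
    · have h1 : ((S:ℝ) * ((a:ℝ) + 2) * (B:ℝ) * ((B:ℝ) - 1)
          - (B:ℝ)^2 * (((a:ℝ) + 1) * ((S:ℝ) - 1))) * (Real.log S)^2 ≤ 0 :=
        mul_nonpos_of_nonpos_of_nonneg hN (le_of_lt hl0)
      have h2 : (0:ℝ) ≤ 6 * (B:ℝ)^2 * (((a:ℝ) + 1) * ((S:ℝ) - 1)) := by positivity
      linarith
    · have hq : ((a:ℝ) + 3) * ((a:ℝ) + 2) * (S:ℝ)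
          ≤ ((a:ℝ) + 9) * ((a:ℝ) + 1) * ((S:ℝ) - 1) := by
        nlinarith [mul_nonneg (show (0:ℝ) ≤ (S:ℝ) - (a:ℝ) - 5 by linarith)
          (show (0:ℝ) ≤ (a:ℝ) by linarith)]
      have hstep1 : ((S:ℝ) * ((a:ℝ) + 2) * (B:ℝ) * ((B:ℝ) - 1)
            - (B:ℝ)^2 * (((a:ℝ) + 1) * ((S:ℝ) - 1))) * (Real.log S)^2
          ≤ ((S:ℝ) * ((a:ℝ) + 2) * (B:ℝ) * ((B:ℝ) - 1)
            - (B:ℝ)^2 * (((a:ℝ) + 1) * ((S:ℝ) - 1))) * ((a:ℝ) + 3) :=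
        mul_le_mul_of_nonneg_left hll (le_of_lt hN)
      have hstep2 : ((S:ℝ) * ((a:ℝ) + 2) * (B:ℝ) * ((B:ℝ) - 1)
            - (B:ℝ)^2 * (((a:ℝ) + 1) * ((S:ℝ) - 1))) * ((a:ℝ) + 3)
          ≤ 6 * (B:ℝ)^2 * (((a:ℝ) + 1) * ((S:ℝ) - 1)) := by
        nlinarith [mul_le_mul_of_nonneg_right hq (sq_nonneg (B:ℝ)),
          mul_nonneg (mul_nonneg (show (0:ℝ) ≤ (S:ℝ) by linarith)
            (show (0:ℝ) ≤ (a:ℝ) + 2 by linarith)) (show (0:ℝ) ≤ (B:ℝ) by linarith),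
          sq_nonneg (B:ℝ)]
      linarith
  calc (∑ g ∈ Finset.range (G + 1),
          ((S : ℝ) * ((Tof S : ℝ) - 1) / ((g : ℝ) + (Tof S : ℝ) - 1)) ^ 2
            * nhgWeight S G (Tof S) g) - (B:ℝ)^2
      ≤ (S:ℝ) * ((a:ℝ) + 2) * (B:ℝ) * ((B:ℝ) - 1) / (((a:ℝ) + 1) * ((S:ℝ) - 1)) - (B:ℝ)^2 := by
        linarith [hsum1]
    _ ≤ 6 * (B:ℝ)^2 / (Real.log S)^2 := hmain
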